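/- Let A be a unital C*-algebra, let X be a Banach right A-module, and let T : A → X be a bounded linear operator. The following are equivalent: (1) T(x)·a = 0 whenever x, a ∈ A satisfy xa = 0; (2) T(b)·a = 0 whenever a, b are self-adjoint elements of A with ba = 0; (3) T(a)·1 = T(1)·a for every a ∈ A, where 1 is the unit of A. -/

import Mathlib

open scoped Real
open Complex Finset

open Finset

namespace LAP
variable (δ : ℝ)

noncomputable def rmp (c s : ℝ) : ℝ := min 1 (max 0 ((s - c) / δ + 1))

variable {δ}

lemma rmp_cont (c : ℝ) : Continuous (rmp δ c) := by
  unfold rmp; fun_prop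

lemma rmp_nonneg (c s : ℝ) : 0 ≤ rmp δ c s := le_min (by norm_num) (le_max_left 0 _)

lemma rmp_le_one (c s : ℝ) : rmp δ c s ≤ 1 := min_le_left _ _

variable (hδ : 0 < δ)
include hδ

lemma rmp_mono (c c' s : ℝ) (h : c ≤ c') : rmp δ c' s ≤ rmp δ c s := by
  unfold rmp
  have h2 : (s - c') / δ ≤ (s - c) / δ := by gcongr <;> linarith
  have h3 : (s - c') / δ + 1 ≤ (s - c) / δ + 1 := by linarith
  exact min_le_min le_rfl (max_le_max le_rfl h3)

lemma rmp_eq_zero (c s : ℝ) (h : s ≤ c - δ) : rmp δ c s = 0 := by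
  have h1 : (s - c) / δ + 1 ≤ 0 := by
    have : (s - c) / δ ≤ -1 := by
      rw [div_le_iff₀ hδ]; linarith
    linarith
  unfold rmp
  rw [max_eq_left h1, min_eq_right (by norm_num)]

lemma rmp_eq_one (c s : ℝ) (h : c ≤ s) : rmp δ c s = 1 := by
  have h1 : (1:ℝ) ≤ (s - c) / δ + 1 := by
    have : 0 ≤ (s - c) / δ := div_nonneg (by linarith) hδ.le
    linarith
  unfold rmp
  rw [min_eq_left (le_max_of_le_right h1)]

end LAP

namespace LAP
section tnt
variable (M δ : ℝ)

noncomputable def tpt (n : ℕ) : ℝ := -M + n * δ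

noncomputable def tnt (n : ℕ) (s : ℝ) : ℝ := rmp δ (tpt M δ n) s - rmp δ (tpt M δ (n+1)) s

variable {M δ} (hδ : 0 < δ)

lemma tpt_succ (n : ℕ) : tpt M δ (n+1) = tpt M δ n + δ := by
  unfold tpt; push_cast; ring

lemma tnt_cont (n : ℕ) : Continuous (tnt M δ n) := (rmp_cont _).sub (rmp_cont _)

include hδ

lemma tnt_nonneg (n : ℕ) (s : ℝ) : 0 ≤ tnt M δ n s := by
  have := rmp_mono hδ (tpt M δ n) (tpt M δ (n+1)) s (by rw [tpt_succ]; linarith)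
  unfold tnt; linarith

lemma tnt_le_one (n : ℕ) (s : ℝ) : tnt M δ n s ≤ 1 := by
  have h1 := rmp_le_one (δ := δ) (tpt M δ n) s
  have h2 := rmp_nonneg (δ := δ) (tpt M δ (n+1)) s
  unfold tnt; linarith

lemma tnt_eq_zero (n : ℕ) (s : ℝ) (h : δ ≤ |s - tpt M δ n|) : tnt M δ n s = 0 := by
  have hsucc := tpt_succ (M := M) (δ := δ) n
  rcases le_abs.mp h with h' | h'
  · -- δ ≤ s - t n, so t n + δ ≤ s : both ramps equal 1
    unfold tnt
    rw [rmp_eq_one hδ _ _ (by linarith), rmp_eq_one hδ _ _ (by linarith)]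
    ring
  · -- δ ≤ t n - s : both ramps equal 0
    unfold tnt
    rw [rmp_eq_zero hδ _ _ (by linarith), rmp_eq_zero hδ _ _ (by linarith)]
    ring

lemma sum_tnt (N : ℕ) (s : ℝ) :
    ∑ n ∈ Finset.range (N+1), tnt M δ n s = rmp δ (tpt M δ 0) s - rmp δ (tpt M δ (N+1)) s :=
  Finset.sum_range_sub' (fun n => rmp δ (tpt M δ n) s) (N+1)

lemma sum_tnt_le_one (N : ℕ) (s : ℝ) : ∑ n ∈ Finset.range (N+1), tnt M δ n s ≤ 1 := by
  rw [sum_tnt hδ]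
  have h1 := rmp_le_one (δ := δ) (tpt M δ 0) s
  have h2 := rmp_nonneg (δ := δ) (tpt M δ (N+1)) s
  linarith

lemma sum_tnt_eq_one (N : ℕ) (s : ℝ) (h1 : -M ≤ s) (h2 : s ≤ -M + N * δ) :
    ∑ n ∈ Finset.range (N+1), tnt M δ n s = 1 := by
  rw [sum_tnt hδ, rmp_eq_one hδ _ _ (by unfold tpt; push_cast; linarith),
    rmp_eq_zero hδ _ _ (by rw [tpt_succ]; unfold tpt; push_cast; linarith)]
  ring

lemma tnt_ne_zero_imp (n : ℕ) (s : ℝ) (h : tnt M δ n s ≠ 0) : |s - tpt M δ n| < δ := by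
  by_contra h'
  exact h (tnt_eq_zero hδ n s (not_lt.mp h'))

lemma tnt_far (n m : ℕ) (s : ℝ) (h : tnt M δ n s ≠ 0) (hfar : ¬(m ≤ n+1 ∧ n ≤ m+1)) :
    tnt M δ m s = 0 := by
  have h1 := tnt_ne_zero_imp hδ n s h
  apply tnt_eq_zero hδ
  have habs : |tpt M δ n - tpt M δ m| ≤ |s - tpt M δ m| + |s - tpt M δ n| := by
    have h5 := abs_add_le (s - tpt M δ m) (tpt M δ n - s)
    rw [show s - tpt M δ m + (tpt M δ n - s) = tpt M δ n - tpt M δ m by ring] at h5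
    rw [abs_sub_comm (tpt M δ n) s] at h5
    linarith
  have h2 : |tpt M δ n - tpt M δ m| ≥ 2 * δ := by
    unfold tpt
    rcases not_and_or.mp hfar with h3 | h3
    · have h4 : (n:ℝ) + 2 ≤ (m:ℝ) := by exact_mod_cast by omega
      rw [abs_sub_comm, _root_.abs_of_nonneg (by nlinarith)]; nlinarith
    · have h4 : (m:ℝ) + 2 ≤ (n:ℝ) := by exact_mod_cast by omega
      rw [_root_.abs_of_nonneg (by nlinarith)]; nlinarith
  linarith

lemma abs_weighted_tnt_le (N : ℕ) (c : ℕ → ℝ) (B : ℝ) (hB : 0 ≤ B)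
    (hc : ∀ n, |c n| ≤ B) (s : ℝ) :
    |∑ n ∈ Finset.range (N+1), c n * tnt M δ n s| ≤ B := by
  calc |∑ n ∈ Finset.range (N+1), c n * tnt M δ n s|
      ≤ ∑ n ∈ Finset.range (N+1), |c n * tnt M δ n s| := Finset.abs_sum_le_sum_abs _ _
    _ ≤ ∑ n ∈ Finset.range (N+1), B * tnt M δ n s := by
        refine Finset.sum_le_sum fun n _ => ?_
        rw [abs_mul, _root_.abs_of_nonneg (tnt_nonneg hδ n s)]
        exact mul_le_mul_of_nonneg_right (hc n) (tnt_nonneg hδ n s)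
    _ = B * ∑ n ∈ Finset.range (N+1), tnt M δ n s := by rw [Finset.mul_sum]
    _ ≤ B * 1 := mul_le_mul_of_nonneg_left (sum_tnt_le_one hδ N s) hB
    _ = B := mul_one B

lemma id_approx (N : ℕ) (s : ℝ) (h1 : -M ≤ s) (h2 : s ≤ -M + N * δ) :
    |s - ∑ n ∈ Finset.range (N+1), tpt M δ n * tnt M δ n s| ≤ δ := by
  have hsum := sum_tnt_eq_one hδ N s h1 h2
  have key : s - ∑ n ∈ Finset.range (N+1), tpt M δ n * tnt M δ n s
      = ∑ n ∈ Finset.range (N+1), (s - tpt M δ n) * tnt M δ n s := by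
    have expand : ∀ n ∈ Finset.range (N+1), (s - tpt M δ n) * tnt M δ n s
        = s * tnt M δ n s - tpt M δ n * tnt M δ n s := fun n _ => by ring
    rw [Finset.sum_congr rfl expand, Finset.sum_sub_distrib, ← Finset.mul_sum, hsum, mul_one]
  rw [key]
  calc |∑ n ∈ Finset.range (N+1), (s - tpt M δ n) * tnt M δ n s|
      ≤ ∑ n ∈ Finset.range (N+1), |(s - tpt M δ n) * tnt M δ n s| :=
        Finset.abs_sum_le_sum_abs _ _
    _ ≤ ∑ n ∈ Finset.range (N+1), δ * tnt M δ n s := by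
        refine Finset.sum_le_sum fun n _ => ?_
        rcases eq_or_ne (tnt M δ n s) 0 with h0 | h0
        · rw [h0]; simp
        · rw [abs_mul, _root_.abs_of_nonneg (tnt_nonneg hδ n s)]
          exact mul_le_mul_of_nonneg_right (tnt_ne_zero_imp hδ n s h0).le
            (tnt_nonneg hδ n s)
    _ = δ * ∑ n ∈ Finset.range (N+1), tnt M δ n s := by rw [Finset.mul_sum]
    _ ≤ δ * 1 := mul_le_mul_of_nonneg_left (sum_tnt_le_one hδ N s) hδ.le
    _ = δ := mul_one δ

end tnt
end LAP




lemma intexp (j : ℤ) : ∫ t in (0:ℝ)..(2*π), Complex.exp (j * t * I) = if j = 0 then ((2*π:ℝ):ℂ) else 0 := by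
  rcases eq_or_ne j 0 with hj | hj
  · simp [hj]
  · rw [if_neg hj]
    have hc : (j : ℂ) * I ≠ 0 := by simp [I_ne_zero, hj]
    have h1 : ∀ t : ℝ, (j:ℂ) * t * I = ((j:ℂ)*I) * t := by intro t; ring
    simp_rw [h1]
    rw [integral_exp_mul_complex hc]
    have : Complex.exp ((j:ℂ)*I*(2*π)) = 1 := by
      have := Complex.exp_int_mul_two_pi_mul_I j
      rw [← this]; ring_nf
    simp [this]

lemma fourier_pick {X : Type*} [NormedAddCommGroup X] [NormedSpace ℂ X] [CompleteSpace X]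
    (E : Finset ℕ) (v : ℕ → ℕ → X) (k : ℤ) (C : ℝ)
    (hbound : ∀ t : ℝ, ‖∑ n ∈ E, ∑ m ∈ E,
      Complex.exp ((((n:ℤ) - (m:ℤ) + k : ℤ) : ℂ) * t * Complex.I) • v n m‖ ≤ C) :
    ‖∑ n ∈ E, ∑ m ∈ E, (if (m:ℤ) = (n:ℤ) + k then v n m else 0)‖ ≤ C := by
  have hcont : ∀ (j : ℤ) (x : X), Continuous (fun t : ℝ => Complex.exp ((j:ℂ) * t * I) • x) := by
    intro j x
    exact (Complex.continuous_exp.comp (by fun_prop)).smul continuous_const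
  have hint : ∫ t in (0:ℝ)..(2*π), ∑ n ∈ E, ∑ m ∈ E,
      Complex.exp ((((n:ℤ) - (m:ℤ) + k : ℤ) : ℂ) * t * Complex.I) • v n m
      = (2*π:ℝ) • ∑ n ∈ E, ∑ m ∈ E, (if (m:ℤ) = (n:ℤ) + k then v n m else 0) := by
    have hcont2 : ∀ n : ℕ, Continuous (fun t : ℝ => ∑ m ∈ E,
        Complex.exp ((((n:ℤ) - (m:ℤ) + k : ℤ) : ℂ) * t * Complex.I) • v n m) :=
      fun n => continuous_finset_sum _ (fun m _ => hcont _ _)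
    rw [intervalIntegral.integral_finset_sum (fun n _ => (hcont2 n).intervalIntegrable _ _)]
    rw [Finset.smul_sum]
    refine Finset.sum_congr rfl fun n _ => ?_
    rw [intervalIntegral.integral_finset_sum (fun m _ => ((hcont _ _).intervalIntegrable _ _)),
      Finset.smul_sum]
    refine Finset.sum_congr rfl fun m _ => ?_
    rw [intervalIntegral.integral_smul_const, intexp]
    rcases eq_or_ne ((m:ℤ)) ((n:ℤ) + k) with h | h
    · rw [if_pos (by omega), if_pos h, Complex.coe_smul]
    · rw [if_neg (by omega), if_neg h, zero_smul, smul_zero]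
  have hnorm : ‖∫ t in (0:ℝ)..(2*π), ∑ n ∈ E, ∑ m ∈ E,
      Complex.exp ((((n:ℤ) - (m:ℤ) + k : ℤ) : ℂ) * t * Complex.I) • v n m‖ ≤ C * |2*π - 0| := by
    apply intervalIntegral.norm_integral_le_of_norm_le_const
    intro t _
    exact hbound t
  rw [hint] at hnorm
  rw [norm_smul, Real.norm_eq_abs, _root_.abs_of_pos (by positivity)] at hnorm
  have h2π : (0:ℝ) < 2*π := by positivity
  rw [_root_.abs_of_pos (by linarith : (0:ℝ) < 2*π - 0)] at hnorm
  have h3 : 2*π * ‖∑ n ∈ E, ∑ m ∈ E, (if (m:ℤ) = (n:ℤ) + k then v n m else 0)‖ ≤ 2*π * C := by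
    nlinarith [hnorm]
  exact le_of_mul_le_mul_left h3 h2π

namespace LAP
section KEY
variable {A X : Type*} [CStarAlgebra A]
    [NormedAddCommGroup X] [NormedSpace ℂ X] [CompleteSpace X]

set_option maxHeartbeats 2000000 in
lemma key (r : A →ₗ[ℂ] X →ₗ[ℂ] X)
    (hr : ∀ (a b : A) (x : X), r (a * b) x = r b (r a x))
    (hrn : ∀ (a : A) (x : X), ‖r a x‖ ≤ ‖x‖ * ‖a‖)
    (T : A →L[ℂ] X)
    (hP2 : ∀ a b : A, IsSelfAdjoint a → IsSelfAdjoint b → b * a = 0 → r a (T b) = 0)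
    (a : A) (ha : IsSelfAdjoint a) : r 1 (T a) = r a (T 1) := by
  rcases subsingleton_or_nontrivial A with hA | hA
  · rw [Subsingleton.elim a (0 : A)]
    simp
  -- the linear map θ
  set θ : A →ₗ[ℂ] X :=
    { toFun := fun b => r 1 (T b) - r b (T 1)
      map_add' := by
        intro b c
        simp only [map_add, LinearMap.add_apply]
        abel
      map_smul' := by
        intro z b
        simp only [map_smul, LinearMap.smul_apply, RingHom.id_apply, smul_sub] } with hθdef
  have hθ : ∀ b : A, θ b = r 1 (T b) - r b (T 1) := fun b => rfl
  rw [← sub_eq_zero, ← hθ a]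
  set c₀ : ℝ := ‖T‖ + ‖T 1‖ with hc₀def
  have hc₀ : 0 ≤ c₀ := by positivity
  have hθn : ∀ b : A, ‖θ b‖ ≤ c₀ * ‖b‖ := by
    intro b
    rw [hθ]
    calc ‖r 1 (T b) - r b (T 1)‖ ≤ ‖r 1 (T b)‖ + ‖r b (T 1)‖ := norm_sub_le _ _
      _ ≤ ‖T b‖ * ‖(1:A)‖ + ‖T 1‖ * ‖b‖ := add_le_add (hrn 1 (T b)) (hrn b (T 1))
      _ = ‖T b‖ + ‖T 1‖ * ‖b‖ := by rw [norm_one, mul_one]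
      _ ≤ ‖T‖ * ‖b‖ + ‖T 1‖ * ‖b‖ := by
          gcongr
          exact T.le_opNorm b
      _ = c₀ * ‖b‖ := by rw [hc₀def]; ring
  have hθ1 : θ (1 : A) = 0 := by rw [hθ]; exact sub_self _
  have hθr1 : ∀ b : A, r 1 (θ b) = θ b := by
    intro b
    rw [hθ, map_sub]
    have h1 : r 1 (r 1 (T b)) = r 1 (T b) := by
      rw [← hr 1 1 (T b), one_mul]
    have h2 : r 1 (r b (T 1)) = r b (T 1) := by
      rw [← hr b 1 (T 1), mul_one]
    rw [h1, h2]
  have hclaim : ∀ b c : A, IsSelfAdjoint b → IsSelfAdjoint c → b * c = 0 →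
      r c (θ b) = 0 := by
    intro b c hb hc hbc
    rw [hθ, map_sub]
    have h1 : r c (r 1 (T b)) = r c (T b) := by rw [← hr 1 c (T b), one_mul]
    have h2 : r c (r b (T 1)) = 0 := by rw [← hr b c (T 1), hbc, map_zero, LinearMap.zero_apply]
    rw [h1, h2, hP2 c b hc hb hbc, sub_zero]
  -- main estimate
  set M : ℝ := ‖a‖ with hMdef
  have hM : 0 ≤ M := norm_nonneg a
  have main : ∀ δ : ℝ, 0 < δ → ‖θ a‖ ≤ 9 * c₀ * δ := by
    intro δ hδ
    set N : ℕ := ⌈(2*M)/δ⌉₊ with hNdef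
    have hN : 2*M ≤ N * δ := by
      rw [hNdef]
      rw [← div_le_iff₀ hδ]
      exact Nat.le_ceil _
    set E : Finset ℕ := Finset.range (N+1) with hEdef
    set u : ℕ → ℝ → ℝ := fun n => tnt M δ n with hudef
    have hucont : ∀ n, Continuous (u n) := fun n => tnt_cont n
    set e : ℕ → A := fun n => cfc (u n) a with hedef
    have he_sa : ∀ n, IsSelfAdjoint (e n) := fun n => cfc_predicate (u n) a
    have cfc_sum' : ∀ (s : Finset ℕ) (f : ℕ → ℝ → ℝ), (∀ i, Continuous (f i)) →
        cfc (fun x : ℝ => ∑ i ∈ s, f i x) a = ∑ i ∈ s, cfc (f i) a := by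
      intro s f hf
      rw [← cfc_sum f a s (fun i _ => (hf i).continuousOn)]
      exact cfc_congr fun x _ => by simp
    have hspec : ∀ s ∈ spectrum ℝ a, -M ≤ s ∧ s ≤ -M + N * δ := by
      intro s hs
      have h1 : |s| ≤ M := by
        have := spectrum.norm_le_norm_of_mem hs
        rwa [Real.norm_eq_abs, ← hMdef] at this
      rw [abs_le] at h1
      exact ⟨h1.1, by linarith [h1.2]⟩
    have hsum1 : ∀ s ∈ spectrum ℝ a, ∑ n ∈ E, u n s = 1 := by
      intro s hs
      exact sum_tnt_eq_one hδ N s (hspec s hs).1 (hspec s hs).2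
    -- adjacency
    set adj : ℕ → ℕ → Prop := fun n m => m ≤ n+1 ∧ n ≤ m+1 with hadjdef
    have hadj_dec : ∀ n, DecidablePred (adj n) := fun n m => instDecidableAnd
    set w : ℕ → A := fun n => ∑ m ∈ E.filter (fun m => adj n m), e m with hwdef
    have hw_sa : ∀ n, IsSelfAdjoint (w n) := fun n => by
      simp only [hwdef]
      show star _ = _
      rw [star_sum]
      exact Finset.sum_congr rfl fun m _ => he_sa m
    -- orthogonality of e n and 1 - w n
    have hlocal : ∀ n, ∀ s ∈ spectrum ℝ a,
        u n s * (1 - ∑ m ∈ E.filter (fun m => adj n m), u m s) = 0 := by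
      intro n s hs
      rcases eq_or_ne (u n s) 0 with h0 | h0
      · rw [h0, zero_mul]
      · have hfar : ∑ m ∈ E.filter (fun m => ¬ adj n m), u m s = 0 := by
          refine Finset.sum_eq_zero fun m hm => ?_
          exact tnt_far hδ n m s h0 (Finset.mem_filter.mp hm).2
        have hsplit := Finset.sum_filter_add_sum_filter_not E (fun m => adj n m)
          (fun m => u m s)
        rw [hfar, add_zero, hsum1 s hs] at hsplit
        rw [hsplit, sub_self, mul_zero]
    have hw_cfc : ∀ n, w n = cfc (fun s => ∑ m ∈ E.filter (fun m => adj n m), u m s) a := by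
      intro n
      simp only [hwdef, hedef]
      exact (cfc_sum' _ _ (fun m => hucont m)).symm
    have horth : ∀ n, e n * (1 - w n) = 0 := by
      intro n
      have h1 : (1 : A) - w n = cfc (fun s : ℝ =>
          1 - ∑ m ∈ E.filter (fun m => adj n m), u m s) a := by
        rw [cfc_sub _ _ a (by fun_prop) (by fun_prop), cfc_const_one ℝ a, hw_cfc n]
      simp only [hedef]
      rw [h1, ← cfc_mul _ _ a (hucont n).continuousOn (by fun_prop)]
      rw [show (0 : A) = cfc (fun _ : ℝ => (0:ℝ)) a from (cfc_const_zero ℝ a).symm]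
      exact cfc_congr (fun s hs => hlocal n s hs)
    have horth' : ∀ n, (1 - w n) * e n = 0 := by
      intro n
      have h1 : (1 : A) - w n = cfc (fun s : ℝ =>
          1 - ∑ m ∈ E.filter (fun m => adj n m), u m s) a := by
        rw [cfc_sub _ _ a (by fun_prop) (by fun_prop), cfc_const_one ℝ a, hw_cfc n]
      simp only [hedef]
      rw [h1, ← cfc_mul _ _ a (by fun_prop) (hucont n).continuousOn]
      rw [show (0 : A) = cfc (fun _ : ℝ => (0:ℝ)) a from (cfc_const_zero ℝ a).symm]
      refine cfc_congr (fun s hs => ?_)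
      rw [mul_comm]
      exact hlocal n s hs
    -- v
    set v : ℕ → ℕ → X := fun n m => r (e m) (θ (e n)) with hvdef
    have hKey1 : ∀ n, θ (e n) = ∑ m ∈ E.filter (fun m => adj n m), v n m := by
      intro n
      have h0 : θ (e n) = r ((1 - w n) + w n) (θ (e n)) := by
        rw [sub_add_cancel, hθr1]
      have h1 : r (1 - w n) (θ (e n)) = 0 :=
        hclaim (e n) (1 - w n) (he_sa n) ((IsSelfAdjoint.one (R := A)).sub (hw_sa n)) (horth n)
      rw [h0, map_add, LinearMap.add_apply, h1, zero_add, hwdef, map_sum,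
        LinearMap.sum_apply]
    have hKey2 : ∀ m, ∑ n ∈ E.filter (fun n => adj m n), v n m = 0 := by
      intro m
      have h1 : ∑ n ∈ E.filter (fun n => adj m n), v n m = r (e m) (θ (w m)) := by
        rw [hwdef, map_sum, map_sum]
      have h2 : θ (w m) = - θ (1 - w m) := by
        rw [map_sub, hθ1, zero_sub, neg_neg]
      have h3 : r (e m) (θ (1 - w m)) = 0 :=
        hclaim (1 - w m) (e m) ((IsSelfAdjoint.one (R := A)).sub (hw_sa m)) (he_sa m) (horth' m)
      rw [h1, h2, map_neg, h3, neg_zero]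
    -- the coefficient bound for complex combinations of the e n
    have coefbound : ∀ φ : ℕ → ℂ, (∀ n, ‖φ n‖ ≤ 1) → ‖∑ n ∈ E, φ n • e n‖ ≤ 2 := by
      intro φ hφ
      have hreal : ∀ x : ℕ → ℝ, (∀ n, |x n| ≤ 1) → ‖∑ n ∈ E, x n • e n‖ ≤ 1 := by
        intro x hx
        have h1 : ∑ n ∈ E, x n • e n = cfc (fun s => ∑ n ∈ E, x n * u n s) a := by
          rw [cfc_sum' E (fun n s => x n * u n s) (fun n => by fun_prop)]
          simp only [hedef]
          refine Finset.sum_congr rfl fun n _ => ?_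
          rw [cfc_const_mul _ _ a (hucont n).continuousOn]
        rw [h1]
        refine norm_cfc_le zero_le_one fun s hs => ?_
        rw [Real.norm_eq_abs]
        exact abs_weighted_tnt_le hδ N x 1 zero_le_one hx s
      have hsplit : ∑ n ∈ E, φ n • e n =
          (∑ n ∈ E, (φ n).re • e n) + I • (∑ n ∈ E, (φ n).im • e n) := by
        rw [Finset.smul_sum, ← Finset.sum_add_distrib]
        refine Finset.sum_congr rfl fun n _ => ?_
        calc φ n • e n = (((φ n).re : ℂ) + ((φ n).im : ℂ) * I) • e n := by
              rw [Complex.re_add_im]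
          _ = ((φ n).re : ℂ) • e n + (I * ((φ n).im : ℂ)) • e n := by
              rw [add_smul, mul_comm]
          _ = (φ n).re • e n + I • ((φ n).im • e n) := by
              rw [Complex.coe_smul, mul_smul, Complex.coe_smul]
      rw [hsplit]
      have h2 : ∀ n, |(φ n).re| ≤ 1 := fun n => (Complex.abs_re_le_norm (φ n)).trans (hφ n)
      have h3 : ∀ n, |(φ n).im| ≤ 1 := fun n => (Complex.abs_im_le_norm (φ n)).trans (hφ n)
      calc ‖(∑ n ∈ E, (φ n).re • e n) + I • (∑ n ∈ E, (φ n).im • e n)‖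
          ≤ ‖∑ n ∈ E, (φ n).re • e n‖ + ‖I • (∑ n ∈ E, (φ n).im • e n)‖ := norm_add_le _ _
        _ ≤ 1 + ‖I‖ * ‖∑ n ∈ E, (φ n).im • e n‖ := by
            rw [norm_smul]
            exact add_le_add (hreal _ h2) le_rfl
        _ ≤ 1 + 1 * 1 := by
            rw [Complex.norm_I]
            exact add_le_add le_rfl (by simpa using hreal _ h3)
        _ = 2 := by norm_num
    -- the central trigonometric bound
    have hZ : ∀ (k : ℤ) (t : ℝ), ‖∑ n ∈ E, ∑ m ∈ E,
        Complex.exp ((((n:ℤ) - (m:ℤ) + k : ℤ) : ℂ) * t * Complex.I) • v n m‖ ≤ 4 * c₀ := by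
      intro k t
      set φ : ℕ → ℂ := fun n => Complex.exp ((n:ℂ) * t * I) with hφdef
      set ψ : ℕ → ℂ := fun m => Complex.exp (-(m:ℂ) * t * I) with hψdef
      set κ : ℂ := Complex.exp ((k:ℂ) * t * I) with hκdef
      set Pt : A := ∑ n ∈ E, φ n • e n with hPtdef
      set Qt : A := ∑ m ∈ E, ψ m • e m with hQtdef
      have hexpnorm : ∀ x : ℝ, ‖Complex.exp ((x:ℂ) * I)‖ = 1 := fun x => by
        rw [Complex.norm_exp_ofReal_mul_I]
      have hrep : ∑ n ∈ E, ∑ m ∈ E,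
          Complex.exp ((((n:ℤ) - (m:ℤ) + k : ℤ) : ℂ) * t * Complex.I) • v n m
          = κ • r Qt (θ Pt) := by
        have h1 : θ Pt = ∑ n ∈ E, φ n • θ (e n) := by
          rw [hPtdef, map_sum]
          exact Finset.sum_congr rfl fun n _ => map_smul θ _ _
        have h2 : r Qt (θ Pt) = ∑ m ∈ E, ψ m • r (e m) (θ Pt) := by
          rw [hQtdef, map_sum, LinearMap.sum_apply]
          refine Finset.sum_congr rfl fun m _ => ?_
          rw [map_smul, LinearMap.smul_apply]
        rw [h2, Finset.smul_sum]
        rw [Finset.sum_comm (s := E) (t := E)]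
        refine Finset.sum_congr rfl fun m hm => ?_
        rw [h1, map_sum]
        rw [Finset.smul_sum, Finset.smul_sum]
        refine Finset.sum_congr rfl fun n hn => ?_
        rw [map_smul]
        rw [smul_smul, smul_smul]
        congr 1
        rw [hκdef, hψdef, hφdef, ← Complex.exp_add, ← Complex.exp_add]
        congr 1
        push_cast
        ring
      rw [hrep, norm_smul]
      have hκ1 : ‖κ‖ = 1 := by
        show ‖Complex.exp ((k:ℂ) * t * I)‖ = 1
        have h5 : (k:ℂ) * t * I = (((k:ℝ) * t : ℝ) : ℂ) * I := by push_cast; ring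
        rw [h5, hexpnorm]
      rw [hκ1, one_mul]
      have hP2' : ‖Pt‖ ≤ 2 := coefbound φ (fun n => by
        show ‖Complex.exp ((n:ℂ) * t * I)‖ ≤ 1
        have h5 : (n:ℂ) * t * I = (((n:ℝ) * t : ℝ) : ℂ) * I := by push_cast; ring
        rw [h5, hexpnorm])
      have hQ2 : ‖Qt‖ ≤ 2 := coefbound ψ (fun m => by
        show ‖Complex.exp (-(m:ℂ) * t * I)‖ ≤ 1
        have h5 : -(m:ℂ) * t * I = (((-(m:ℝ)) * t : ℝ) : ℂ) * I := by push_cast; ring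
        rw [h5, hexpnorm])
      calc ‖r Qt (θ Pt)‖ ≤ ‖θ Pt‖ * ‖Qt‖ := hrn Qt (θ Pt)
        _ ≤ (c₀ * ‖Pt‖) * ‖Qt‖ := by
            gcongr
            exact hθn Pt
        _ ≤ (c₀ * 2) * 2 := by gcongr
        _ = 4 * c₀ := by ring
    -- the two diagonal sums
    have hdiag : ∀ (k : ℤ) (ξ : ℝ), ‖∑ n ∈ E, ∑ m ∈ E,
        (if (m:ℤ) = (n:ℤ) + k then ξ • v n m else 0)‖ ≤ |ξ| * (4 * c₀) := by
      intro k ξ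
      refine fourier_pick E (fun n m => ξ • v n m) k (|ξ| * (4 * c₀)) fun t => ?_
      have h2 : ∑ n ∈ E, ∑ m ∈ E, Complex.exp ((((n:ℤ) - (m:ℤ) + k : ℤ) : ℂ) * t * Complex.I)
            • (ξ • v n m)
          = ξ • ∑ n ∈ E, ∑ m ∈ E,
            Complex.exp ((((n:ℤ) - (m:ℤ) + k : ℤ) : ℂ) * t * Complex.I) • v n m := by
        rw [Finset.smul_sum]
        refine Finset.sum_congr rfl fun n _ => ?_
        rw [Finset.smul_sum]
        refine Finset.sum_congr rfl fun m _ => ?_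
        rw [smul_comm]
      rw [h2, norm_smul, Real.norm_eq_abs]
      exact mul_le_mul_of_nonneg_left (hZ k t) (abs_nonneg ξ)
    -- assembling the telescoping identity
    set SA : X := ∑ n ∈ E, tpt M δ n • θ (e n) with hSAdef
    have hApprox : ‖θ a - SA‖ ≤ c₀ * δ := by
      have h1 : θ a - SA = θ (a - ∑ n ∈ E, tpt M δ n • e n) := by
        rw [map_sub, map_sum]
        congr 1
        rw [hSAdef]
        exact Finset.sum_congr rfl fun n _ => (LinearMap.map_smul_of_tower θ _ _).symm
      have h2 : a - ∑ n ∈ E, tpt M δ n • e n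
          = cfc (fun s : ℝ => s - ∑ n ∈ E, tpt M δ n * u n s) a := by
        have ha' : a = cfc (fun s : ℝ => s) a := (cfc_id' ℝ a).symm
        have hsum : ∑ n ∈ E, tpt M δ n • e n
            = cfc (fun s : ℝ => ∑ n ∈ E, tpt M δ n * u n s) a := by
          rw [cfc_sum' E (fun n s => tpt M δ n * u n s) (fun n => by fun_prop)]
          simp only [hedef]
          refine Finset.sum_congr rfl fun n _ => ?_
          rw [cfc_const_mul _ _ a (hucont n).continuousOn]
        rw [cfc_sub _ _ a (by fun_prop) (by fun_prop), ← ha', ← hsum]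
      have h3 : ‖a - ∑ n ∈ E, tpt M δ n • e n‖ ≤ δ := by
        rw [h2]
        refine norm_cfc_le hδ.le fun s hs => ?_
        rw [Real.norm_eq_abs]
        exact id_approx hδ N s (hspec s hs).1 (hspec s hs).2
      rw [h1]
      calc ‖θ (a - ∑ n ∈ E, tpt M δ n • e n)‖
          ≤ c₀ * ‖a - ∑ n ∈ E, tpt M δ n • e n‖ := hθn _
        _ ≤ c₀ * δ := mul_le_mul_of_nonneg_left h3 hc₀
    have hSA_split : SA = (∑ n ∈ E, ∑ m ∈ E, (if (m:ℤ) = (n:ℤ) + 1 then (-δ) • v n m else 0))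
        + (∑ n ∈ E, ∑ m ∈ E, (if (m:ℤ) = (n:ℤ) + (-1) then δ • v n m else 0)) := by
      have hA : SA = ∑ n ∈ E, ∑ m ∈ E, (if adj n m then tpt M δ n • v n m else 0) := by
        rw [hSAdef]
        refine Finset.sum_congr rfl fun n _ => ?_
        rw [hKey1 n, Finset.smul_sum, ← Finset.sum_filter]
      have hB : (0:X) = ∑ n ∈ E, ∑ m ∈ E, (if adj n m then tpt M δ m • v n m else 0) := by
        rw [Finset.sum_comm]
        symm
        refine Finset.sum_eq_zero fun m _ => ?_
        have hsymm : ∀ n, (if adj n m then tpt M δ m • v n m else 0)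
            = (if adj m n then tpt M δ m • v n m else 0) := by
          intro n
          have : adj n m ↔ adj m n := by rw [hadjdef]; constructor <;> exact fun h => ⟨h.2, h.1⟩
          rw [if_congr this rfl rfl]
        calc ∑ n ∈ E, (if adj n m then tpt M δ m • v n m else 0)
            = ∑ n ∈ E, (if adj m n then tpt M δ m • v n m else 0) :=
              Finset.sum_congr rfl fun n _ => hsymm n
          _ = ∑ n ∈ E.filter (fun n => adj m n), tpt M δ m • v n m := (Finset.sum_filter _ _).symm
          _ = tpt M δ m • ∑ n ∈ E.filter (fun n => adj m n), v n m := by rw [Finset.smul_sum]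
          _ = 0 := by rw [hKey2 m, smul_zero]
      have hcomb : SA = ∑ n ∈ E, ∑ m ∈ E,
          (if adj n m then (tpt M δ n - tpt M δ m) • v n m else 0) := by
        conv_lhs => rw [show SA = SA - 0 by rw [sub_zero]]
        rw [hA, hB, ← Finset.sum_sub_distrib]
        refine Finset.sum_congr rfl fun n _ => ?_
        rw [← Finset.sum_sub_distrib]
        refine Finset.sum_congr rfl fun m _ => ?_
        rcases em (adj n m) with h | h
        · rw [if_pos h, if_pos h, if_pos h, sub_smul]
        · rw [if_neg h, if_neg h, if_neg h, sub_zero]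
      rw [hcomb, ← Finset.sum_add_distrib]
      refine Finset.sum_congr rfl fun n hn => ?_
      rw [← Finset.sum_add_distrib]
      refine Finset.sum_congr rfl fun m hm => ?_
      rcases eq_or_ne ((m:ℤ)) ((n:ℤ) + 1) with h1 | h1
      · have hm' : m = n + 1 := by omega
        have hadj : adj n m := by rw [hadjdef]; omega
        have c2 : ¬((m:ℤ) = (n:ℤ) + (-1)) := by omega
        rw [if_pos h1, if_neg c2, if_pos hadj, add_zero]
        congr 1
        unfold tpt
        rw [hm']
        push_cast
        ring
      · rcases eq_or_ne ((m:ℤ)) ((n:ℤ) + (-1)) with h2 | h2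
        · have hn' : n = m + 1 := by omega
          have hadj : adj n m := by rw [hadjdef]; omega
          rw [if_pos h2, if_neg h1, if_pos hadj, zero_add]
          congr 1
          unfold tpt
          rw [hn']
          push_cast
          ring
        · rw [if_neg h1, if_neg h2, add_zero]
          rcases em (adj n m) with h | h
          · have : n = m := by rw [hadjdef] at h; omega
            rw [if_pos h, this, sub_self, zero_smul]
          · rw [if_neg h]
    have hSAnorm : ‖SA‖ ≤ 8 * c₀ * δ := by
      rw [hSA_split]
      have b1 := hdiag 1 (-δ)
      have b2 := hdiag (-1) δ
      rw [abs_neg, _root_.abs_of_pos hδ] at b1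
      rw [_root_.abs_of_pos hδ] at b2
      calc ‖_ + _‖ ≤ δ * (4 * c₀) + δ * (4 * c₀) := le_trans (norm_add_le _ _) (add_le_add b1 b2)
        _ = 8 * c₀ * δ := by ring
    calc ‖θ a‖ = ‖(θ a - SA) + SA‖ := by rw [sub_add_cancel]
      _ ≤ ‖θ a - SA‖ + ‖SA‖ := norm_add_le _ _
      _ ≤ c₀ * δ + 8 * c₀ * δ := add_le_add hApprox hSAnorm
      _ = 9 * c₀ * δ := by ring
  -- conclude
  by_contra hne
  have hpos : 0 < ‖θ a‖ := norm_pos_iff.mpr hne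
  have h9 : 0 ≤ 9 * c₀ := by linarith
  have := main (‖θ a‖ / (9 * c₀ + 1)) (by positivity)
  have hlt : 9 * c₀ * (‖θ a‖ / (9 * c₀ + 1)) < ‖θ a‖ := by
    rw [div_eq_inv_mul, ← mul_assoc]
    have : 9 * c₀ * (9 * c₀ + 1)⁻¹ < 1 := by
      rw [mul_inv_lt_iff₀ (by linarith), one_mul]
      linarith
    nlinarith [hpos, this]
  linarith

end KEY
end LAP

/-- Characterization of bounded left-annihilator-preserving operators from a unital
C*-algebra `A` into a Banach right `A`-module `X` (right action `r a x = x • a`):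
the following are equivalent:
(1) `T(x) • a = 0` whenever `x * a = 0`;
(2) `T(b) • a = 0` whenever `a, b` are self-adjoint with `b * a = 0`;
(3) `T(a) • 1 = T(1) • a` for all `a`. -/
theorem left_annihilator_preserving_tfae
    {A X : Type*} [CStarAlgebra A]
    [NormedAddCommGroup X] [NormedSpace ℂ X] [CompleteSpace X]
    (r : A →ₗ[ℂ] X →ₗ[ℂ] X)
    (hr : ∀ (a b : A) (x : X), r (a * b) x = r b (r a x))
    (hrn : ∀ (a : A) (x : X), ‖r a x‖ ≤ ‖x‖ * ‖a‖)
    (T : A →L[ℂ] X) :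
    ((∀ x a : A, x * a = 0 → r a (T x) = 0) ↔
        (∀ a : A, r 1 (T a) = r a (T 1))) ∧
    ((∀ a b : A, IsSelfAdjoint a → IsSelfAdjoint b → b * a = 0 → r a (T b) = 0) ↔
        (∀ a : A, r 1 (T a) = r a (T 1))) := by
  have imp31 : (∀ a : A, r 1 (T a) = r a (T 1)) →
      (∀ x a : A, x * a = 0 → r a (T x) = 0) := by
    intro h3 x a hxa
    have h1 : r a (T x) = r a (r 1 (T x)) := by
      rw [← hr 1 a (T x), one_mul]
    rw [h1, h3 x, ← hr x a (T 1), hxa, map_zero, LinearMap.zero_apply]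
  have imp23 : (∀ a b : A, IsSelfAdjoint a → IsSelfAdjoint b → b * a = 0 → r a (T b) = 0) →
      (∀ a : A, r 1 (T a) = r a (T 1)) := by
    intro h2 a
    have key' := LAP.key r hr hrn T h2
    have hre : IsSelfAdjoint (↑(realPart a) : A) := (realPart a).2
    have him : IsSelfAdjoint (↑(imaginaryPart a) : A) := (imaginaryPart a).2
    calc r 1 (T a)
        = r 1 (T ((↑(realPart a) : A) + Complex.I • (↑(imaginaryPart a) : A))) := by
          rw [realPart_add_I_smul_imaginaryPart]
      _ = r 1 (T (↑(realPart a) : A)) + Complex.I • r 1 (T (↑(imaginaryPart a) : A)) := by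
          rw [map_add, map_smul, map_add, map_smul]
      _ = r (↑(realPart a) : A) (T 1) + Complex.I • r (↑(imaginaryPart a) : A) (T 1) := by
          rw [key' _ hre, key' _ him]
      _ = r ((↑(realPart a) : A) + Complex.I • (↑(imaginaryPart a) : A)) (T 1) := by
          rw [map_add, map_smul, LinearMap.add_apply, LinearMap.smul_apply]
      _ = r a (T 1) := by rw [realPart_add_I_smul_imaginaryPart]
  constructor
  · exact ⟨fun h1 => imp23 (fun a b hsa hsb hba => h1 b a hba), imp31⟩
  · exact ⟨imp23, fun h3 a b _ _ hba => imp31 h3 b a hba⟩
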